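/- For every N₀ ∈ ℕ, the intersection, taken over all N ≤ N₀ and all Hermitian matrices a₁, a₂ ∈ M_N(ℂ), of the kernels of the linear maps Tr ∘ ev_{a₁,a₂} : ℂ⟨x₁,x₂⟩ → ℂ, strictly contains the commutator subspace 𝓘; that is, there exists y ∈ ℂ⟨x₁,x₂⟩ with y ∉ 𝓘 such that Tr(ev_{a₁,a₂}(y)) = 0 for all N ≤ N₀ and all Hermitian a₁, a₂ ∈ M_N(ℂ). -/

import Mathlib

/- STATEMENT 5 (unnumbered Proposition, end of Section 2): For every N₀ ∈ ℕ, the intersection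
over all N ≤ N₀ and all Hermitian a₁, a₂ ∈ M_N(ℂ) of the kernels of Tr ∘ ev_{a₁,a₂} strictly
contains the commutator subspace 𝓘. -/

noncomputable section

abbrev FreeCAlg : Type := MonoidAlgebra ℂ (FreeMonoid (Fin 2))

/-- The commutator subspace 𝓘. -/
def commutatorSubspace : Submodule ℂ FreeCAlg :=
  Submodule.span ℂ {y : FreeCAlg | ∃ P Q : FreeCAlg, y = P * Q - Q * P}

/-- The evaluation homomorphism ev_{a₁,a₂} : ℂ⟨x₁,x₂⟩ → M_N(ℂ), x₁ ↦ a₁, x₂ ↦ a₂. -/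
def evMat {N : ℕ} (a₁ a₂ : Matrix (Fin N) (Fin N) ℂ) :
    FreeCAlg →ₐ[ℂ] Matrix (Fin N) (Fin N) ℂ :=
  MonoidAlgebra.lift ℂ (Matrix (Fin N) (Fin N) ℂ) (FreeMonoid (Fin 2))
    (FreeMonoid.lift (fun i => if i = 0 then a₁ else a₂))

namespace AuxSmallTrace

open Matrix
open Fin.NatCast

/-! ### Generators -/

def X (i : Fin 2) : FreeCAlg := MonoidAlgebra.of ℂ (FreeMonoid (Fin 2)) (FreeMonoid.of i)

lemma evMat_X {N : ℕ} (a₁ a₂ : Matrix (Fin N) (Fin N) ℂ) (i : Fin 2) :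
    evMat a₁ a₂ (X i) = if i = 0 then a₁ else a₂ := by
  simp [evMat, X, MonoidAlgebra.lift_of]

/-! ### The witness matrices: a cyclic shift and a matrix unit -/

def cyc (n : ℕ) : Matrix (Fin (n+1)) (Fin (n+1)) ℂ :=
  Matrix.of fun i j => if j = i + 1 then 1 else 0

lemma cyc_pow (n k : ℕ) :
    (cyc n) ^ k = Matrix.of (fun i j => if j = i + (k : Fin (n+1)) then 1 else 0) := by
  induction k with
  | zero => ext i j; simp [Matrix.one_apply, eq_comm]
  | succ k ih =>
    rw [pow_succ, ih]
    ext i j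
    simp only [Matrix.mul_apply, Matrix.of_apply, cyc, ite_mul, one_mul, zero_mul]
    rw [Finset.sum_ite_eq' Finset.univ (i + (k : Fin (n+1)))]
    simp [add_assoc]

lemma cyc_pow_mul_E00_mul (n a b : ℕ) :
    cyc n ^ a * Matrix.single (0 : Fin (n+1)) 0 (1:ℂ) * cyc n ^ b
      = Matrix.single (-(a : Fin (n+1))) ((b : Fin (n+1))) 1 := by
  rw [cyc_pow, cyc_pow]
  ext i j
  rw [Matrix.mul_assoc]
  simp only [Matrix.mul_apply, Matrix.of_apply, Matrix.single, ite_mul, mul_ite,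
    one_mul, mul_one, zero_mul, mul_zero]
  rw [Finset.sum_ite_eq' Finset.univ (i + (a : Fin (n+1)))]
  simp only [Finset.mem_univ, if_true]
  have hsum : (∑ x1 : Fin (n+1), if j = x1 + (b:Fin (n+1)) then if (0:Fin (n+1)) = i + (a:Fin (n+1)) ∧ (0:Fin (n+1)) = x1 then (1:ℂ) else 0 else 0)
      = if (0:Fin (n+1)) = i + (a:Fin (n+1)) ∧ j = (b:Fin (n+1)) then 1 else 0 := by
    rw [Finset.sum_eq_single (0 : Fin (n+1))]
    · simp [zero_add, ← ite_and, and_comm]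
    · intro x _ hxne
      simp [Ne.symm hxne]
    · simp
  rw [hsum]
  refine if_congr ?_ rfl rfl
  rw [eq_comm, add_eq_zero_iff_eq_neg, eq_comm (a := i), eq_comm (a := j)]

/-! ### Products of matrix units along a chain -/

def chainEntry {I : Type} [DecidableEq I] : List (I × I) → I → I → ℂ
  | [], p, q => if p = q then 1 else 0
  | ab :: t, p, q => if p = ab.1 then chainEntry t ab.2 q else 0

lemma prod_chain {I : Type} [Fintype I] [DecidableEq I] (L : List (I × I)) (p q : I) :
    ((L.map fun ab => Matrix.single ab.1 ab.2 (1:ℂ)).prod) p q = chainEntry L p q := by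
  induction L generalizing p with
  | nil => simp [chainEntry, Matrix.one_apply]
  | cons ab t ih =>
    simp only [List.map_cons, List.prod_cons, chainEntry]
    by_cases h : p = ab.1
    · subst h
      rw [Matrix.single_mul_apply_same, one_mul, ih, if_pos rfl]
    · rw [Matrix.single_mul_apply_of_ne (h := h), if_neg h]

lemma chainEntry_ofFn (m : ℕ) : ∀ (k : ℕ) (g : Fin k → Fin m) (p : Fin (m+1)),
    chainEntry ((List.ofFn g).map fun x => (Fin.castSucc x, Fin.succ x)) p (Fin.last m)
      = if (∀ i : Fin k, (g i : ℕ) = (p : ℕ) + (i : ℕ)) ∧ (p : ℕ) + k = m then 1 else 0 := by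
  intro k
  induction k with
  | zero =>
    intro g p
    simp [chainEntry, Fin.ext_iff, Fin.val_last]
  | succ k ih =>
    intro g p
    rw [List.ofFn_succ, List.map_cons]
    simp only [chainEntry]
    by_cases hp : p = Fin.castSucc (g 0)
    · rw [if_pos hp, ih]
      have hpv : (p : ℕ) = (g 0 : ℕ) := by rw [hp]; simp
      refine if_congr ?_ rfl rfl
      constructor
      · rintro ⟨h1, h2⟩
        simp only [Fin.val_succ] at h1 h2
        constructor
        · intro i
          induction i using Fin.cases with
          | zero => simpa using hpv.symm
          | succ j =>
            have := h1 j
            simp only [Fin.val_succ]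
            omega
        · omega
      · rintro ⟨h1, h2⟩
        simp only [Fin.val_succ]
        constructor
        · intro i
          have := h1 i.succ
          simp only [Fin.val_succ] at this
          omega
        · omega
    · rw [if_neg hp, if_neg]
      rintro ⟨h1, _⟩
      exact hp (Fin.ext (by simpa using (h1 0).symm))

lemma chainEntry_perm (m : ℕ) (σ : Equiv.Perm (Fin m)) :
    chainEntry ((List.ofFn fun i => σ i).map fun x => (Fin.castSucc x, Fin.succ x)) 0 (Fin.last m)
      = if σ = 1 then 1 else 0 := by
  rw [chainEntry_ofFn]
  refine if_congr ?_ rfl rfl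
  simp only [Fin.val_zero, zero_add, and_true]
  constructor
  · intro h
    exact Equiv.ext fun i => Fin.ext (h i)
  · intro h i
    rw [h]; simp

lemma prod_entry_perm (n : ℕ) (σ : Equiv.Perm (Fin n)) :
    ((List.ofFn fun i =>
        Matrix.single (Fin.castSucc (σ i)) (Fin.succ (σ i)) (1:ℂ)).prod) 0 (Fin.last n)
      = if σ = 1 then 1 else 0 := by
  have h : (List.ofFn fun i => Matrix.single (Fin.castSucc (σ i)) (Fin.succ (σ i)) (1:ℂ))
      = ((List.ofFn fun i => σ i).map fun x => (Fin.castSucc x, Fin.succ x)).map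
          (fun ab => Matrix.single ab.1 ab.2 1) := by
    rw [List.map_map, List.map_ofFn]
    rfl
  rw [h, prod_chain, chainEntry_perm]

lemma trace_stdBasis_mul {I : Type} [Fintype I] [DecidableEq I] (a b : I) (M : Matrix I I ℂ) :
    Matrix.trace (Matrix.single a b (1:ℂ) * M) = M b a := by
  have h : ∀ i : I, (Matrix.single a b (1:ℂ) * M) i i = if i = a then M b i else 0 := by
    intro i
    by_cases hi : i = a
    · subst hi
      rw [Matrix.single_mul_apply_same, one_mul, if_pos rfl]
    · rw [Matrix.single_mul_apply_of_ne (h := hi), if_neg hi]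
  rw [Matrix.trace]
  simp only [Matrix.diag, h]
  rw [Finset.sum_ite_eq' Finset.univ a]
  simp

/-! ### The element y -/

def v (n : ℕ) (i : Fin n) : FreeCAlg := X 0 ^ (n + 1 - (i : ℕ)) * X 1 * X 0 ^ ((i : ℕ) + 1)

def u : FreeCAlg := X 0 * X 1

def S (n : ℕ) : FreeCAlg :=
  ∑ σ : Equiv.Perm (Fin n),
    ((Equiv.Perm.sign σ : ℤ) : ℂ) • (List.ofFn fun i => v n (σ i)).prod

def y (n : ℕ) : FreeCAlg := u * S n

lemma evMat_S {n N : ℕ} (a₁ a₂ : Matrix (Fin N) (Fin N) ℂ) :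
    evMat a₁ a₂ (S n) = ∑ σ : Equiv.Perm (Fin n),
      ((Equiv.Perm.sign σ : ℤ) : ℂ) • (List.ofFn fun i => evMat a₁ a₂ (v n (σ i))).prod := by
  rw [S, map_sum]
  refine Finset.sum_congr rfl fun σ _ => ?_
  rw [_root_.map_smul, map_list_prod, List.map_ofFn]
  rfl

lemma evMat_S_alt {n N : ℕ} (a₁ a₂ : Matrix (Fin N) (Fin N) ℂ) :
    evMat a₁ a₂ (S n)
      = MultilinearMap.alternatization
          (MultilinearMap.mkPiAlgebraFin ℂ n (Matrix (Fin N) (Fin N) ℂ))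
          (fun i => evMat a₁ a₂ (v n i)) := by
  rw [evMat_S, MultilinearMap.alternatization_apply]
  refine Finset.sum_congr rfl fun σ _ => ?_
  rw [Units.smul_def, ← Int.cast_smul_eq_zsmul ℂ]
  congr 1

lemma evMat_S_eq_zero {n N : ℕ} (hN : N * N < n) (a₁ a₂ : Matrix (Fin N) (Fin N) ℂ) :
    evMat a₁ a₂ (S n) = 0 := by
  rw [evMat_S_alt]
  apply AlternatingMap.map_linearDependent
  intro h
  have := h.fintype_card_le_finrank
  rw [Module.finrank_matrix, Module.finrank_self] at this
  simp only [Fintype.card_fin, mul_one] at this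
  omega

/-! ### Evaluation at the witness matrices -/

lemma evMat_X0 (n : ℕ) :
    evMat (cyc n) (Matrix.single (0 : Fin (n+1)) 0 (1:ℂ)) (X 0) = cyc n := by
  rw [evMat_X]; simp

lemma evMat_X1 (n : ℕ) :
    evMat (cyc n) (Matrix.single (0 : Fin (n+1)) 0 (1:ℂ)) (X 1)
      = Matrix.single (0 : Fin (n+1)) 0 (1:ℂ) := by
  rw [evMat_X]; simp

lemma natCast_castSucc {n : ℕ} (i : Fin n) :
    (((i : ℕ) : Fin (n+1))) = Fin.castSucc i := by
  apply Fin.ext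
  rw [Fin.val_cast_of_lt (by omega)]
  simp

lemma evMat_v_witness (n : ℕ) (i : Fin n) :
    evMat (cyc n) (Matrix.single (0 : Fin (n+1)) 0 (1:ℂ)) (v n i)
      = Matrix.single (Fin.castSucc i) (Fin.succ i) 1 := by
  rw [v, _root_.map_mul, _root_.map_mul, map_pow, map_pow, evMat_X0, evMat_X1, cyc_pow_mul_E00_mul]
  have h1 : -(((n + 1 - (i : ℕ) : ℕ)) : Fin (n+1)) = Fin.castSucc i := by
    rw [neg_eq_iff_add_eq_zero, ← natCast_castSucc, ← Nat.cast_add]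
    have : (n + 1 - (i : ℕ)) + (i : ℕ) = n + 1 := by omega
    rw [this, Fin.natCast_self]
  have h2 : ((((i : ℕ) + 1 : ℕ)) : Fin (n+1)) = Fin.succ i := by
    apply Fin.ext
    rw [Fin.val_cast_of_lt (by omega)]
    simp
  rw [h1, h2]

lemma evMat_u_witness (n : ℕ) :
    evMat (cyc n) (Matrix.single (0 : Fin (n+1)) 0 (1:ℂ)) u
      = Matrix.single (Fin.last n) (0 : Fin (n+1)) 1 := by
  rw [u, _root_.map_mul, evMat_X0, evMat_X1]
  have h := cyc_pow_mul_E00_mul n 1 0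
  rw [pow_one, pow_zero, mul_one] at h
  rw [h]
  have h1 : -((1 : ℕ) : Fin (n+1)) = Fin.last n := by
    rw [neg_eq_iff_add_eq_zero, Nat.cast_one, add_comm (1 : Fin (n+1)) (Fin.last n),
      Fin.last_add_one]
  rw [h1, Nat.cast_zero]

lemma trace_y_witness (n : ℕ) :
    Matrix.trace (evMat (cyc n) (Matrix.single (0 : Fin (n+1)) 0 (1:ℂ)) (y n)) = 1 := by
  rw [y, _root_.map_mul, evMat_u_witness, evMat_S]
  rw [Finset.mul_sum, Matrix.trace_sum]
  have hterm : ∀ σ : Equiv.Perm (Fin n),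
      Matrix.trace (Matrix.single (Fin.last n) (0 : Fin (n+1)) 1 *
        (((Equiv.Perm.sign σ : ℤ) : ℂ) •
          (List.ofFn fun i => evMat (cyc n) (Matrix.single (0 : Fin (n+1)) 0 (1:ℂ))
            (v n (σ i))).prod))
      = if σ = 1 then 1 else 0 := by
    intro σ
    rw [Matrix.mul_smul, Matrix.trace_smul]
    simp only [evMat_v_witness]
    rw [trace_stdBasis_mul, prod_entry_perm]
    by_cases hσ : σ = 1
    · subst hσ
      simp
    · simp [hσ]
  calc (∑ σ : Equiv.Perm (Fin n), Matrix.trace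
          (Matrix.single (Fin.last n) (0 : Fin (n+1)) 1 *
            (((Equiv.Perm.sign σ : ℤ) : ℂ) •
              (List.ofFn fun i => evMat (cyc n) (Matrix.single (0 : Fin (n+1)) 0 (1:ℂ))
                (v n (σ i))).prod)))
      = ∑ σ : Equiv.Perm (Fin n), if σ = 1 then (1:ℂ) else 0 :=
        Finset.sum_congr rfl fun σ _ => hterm σ
    _ = 1 := by rw [Finset.sum_ite_eq' Finset.univ 1]; simp

/-- The trace functional at arbitrary matrices kills the commutator subspace. -/
lemma trace_eval_eq_zero_of_mem {N : ℕ} (b₁ b₂ : Matrix (Fin N) (Fin N) ℂ)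
    {z : FreeCAlg} (hz : z ∈ commutatorSubspace) :
    Matrix.trace (evMat b₁ b₂ z) = 0 := by
  induction hz using Submodule.span_induction with
  | mem w hw =>
    obtain ⟨P, Q, rfl⟩ := hw
    rw [map_sub, _root_.map_mul, _root_.map_mul, Matrix.trace_sub, Matrix.trace_mul_comm, sub_self]
  | zero => simp
  | add w₁ w₂ _ _ h1 h2 => rw [map_add, Matrix.trace_add, h1, h2, add_zero]
  | smul c w _ h => rw [_root_.map_smul, Matrix.trace_smul, h, smul_zero]

end AuxSmallTrace

open AuxSmallTrace

theorem exists_notMem_commutator_killed_by_all_small_traces (N₀ : ℕ) :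
    ∃ y : FreeCAlg, y ∉ commutatorSubspace ∧
      ∀ N : ℕ, N ≤ N₀ → ∀ a₁ a₂ : Matrix (Fin N) (Fin N) ℂ,
        a₁.IsHermitian → a₂.IsHermitian →
        Matrix.trace (evMat a₁ a₂ y) = 0 := by
  refine ⟨AuxSmallTrace.y (N₀ * N₀ + 1), ?_, ?_⟩
  · intro hmem
    have h0 := trace_eval_eq_zero_of_mem
      (cyc (N₀ * N₀ + 1)) (Matrix.single 0 0 (1:ℂ)) hmem
    rw [trace_y_witness] at h0
    exact one_ne_zero h0
  · intro N hN a₁ a₂ _ _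
    have hlt : N * N < N₀ * N₀ + 1 := by
      have := Nat.mul_le_mul hN hN
      omega
    rw [y, _root_.map_mul, evMat_S_eq_zero hlt, mul_zero, Matrix.trace_zero]

end
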